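/- Let (X,r) be a finite colored space with 2 ≤ a_2(r), m_2(r) > 0, and |X| ≥ 5. Then there exists a fusion r_1 of r such that a_2(r) − a_2(r_1) = 1 and a_3(r) − a_3(r_1) ≥ 1. -/

import Mathlib

/-- The set of colors of the colored space `(X, r)`: values `r x y` for distinct `x, y`. -/
def colorIm {X C : Type*} (r : X → X → C) : Set C :=
  {α | ∃ x y : X, x ≠ y ∧ r x y = α}

/-- `a₂(r)`: the number of colors. -/
noncomputable def a2 {X C : Type*} (r : X → X → C) : ℕ := (colorIm r).ncard

/-- `A₃(r)`: the set of multisets of colors of triangles on 3-subsets of `X`. -/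
def A3 {X C : Type*} (r : X → X → C) : Set (Multiset C) :=
  {m | ∃ x y z : X, x ≠ y ∧ y ≠ z ∧ x ≠ z ∧ m = {r x y, r y z, r x z}}

/-- `a₃(r)`: the number of isometry classes of 3-subsets. -/
noncomputable def a3 {X C : Type*} (r : X → X → C) : ℕ := (A3 r).ncard

/-- `M_k(r)`: colors `α` such that the graph `(X, E_α)` has a vertex of degree at least `k`. -/
def Mdeg {X C : Type*} (r : X → X → C) (k : ℕ) : Set C :=
  {α | ∃ x : X, k ≤ {y | y ≠ x ∧ r x y = α}.ncard}

/-- A nonempty set `Γ` of colors is closed if `α, β ∈ Γ` and `αβγ ∈ A₃(r)` imply `γ ∈ Γ`. -/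
def IsClosedColors {X C : Type*} (r : X → X → C) (Γ : Set C) : Prop :=
  ∀ α β γ : C, α ∈ Γ → β ∈ Γ → ({α, β, γ} : Multiset C) ∈ A3 r → γ ∈ Γ

/-- The union of the color classes `E_α`, `α ∈ S`, is a matching (max degree ≤ 1). -/
def IsMatchingOn {X C : Type*} (r : X → X → C) (S : Set C) : Prop :=
  ∀ x y z : X, y ≠ x → z ≠ x → r x y ∈ S → r x z ∈ S → y = z

/-- `r₁` is a fusion of `r`: the color partition of `r` refines that of `r₁`. -/
def IsFusion {X C D : Type*} (r : X → X → C) (r₁ : X → X → D) : Prop :=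
  ∀ x y u v : X, x ≠ y → u ≠ v → r x y = r u v → r₁ x y = r₁ u v

/-- The connected component of `x₀` in the graph on `X` whose edges are the pairs
colored by an element of `S`. -/
def compOf {X C : Type*} (r : X → X → C) (S : Set C) (x₀ : X) : Set X :=
  {y | Relation.ReflTransGen (fun a b => a ≠ b ∧ r a b ∈ S) x₀ y}

/-- `A₃` of the subspace induced on `W ⊆ X`. -/
def A3on {X C : Type*} (r : X → X → C) (W : Set X) : Set (Multiset C) :=
  {m | ∃ x ∈ W, ∃ y ∈ W, ∃ z ∈ W, x ≠ y ∧ y ≠ z ∧ x ≠ z ∧ m = {r x y, r y z, r x z}}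

namespace LemA1Aux

noncomputable def mrg {C : Type*} (a b c : C) : C := by
  classical exact if c = b then a else c

@[simp] lemma mrg_self {C : Type*} (a b : C) : mrg a b b = a := by simp [mrg]

@[simp] lemma mrg_left {C : Type*} (a b : C) : mrg a b a = a := by
  simp only [mrg]; split <;> rfl

lemma mrg_of_ne {C : Type*} {a b c : C} (h : c ≠ b) : mrg a b c = c := by
  simp [mrg, h]

lemma map3 {C : Type*} (f : C → C) (a b c : C) :
    ({a, b, c} : Multiset C).map f = {f a, f b, f c} := by
  show (a ::ₘ b ::ₘ {c}).map f = _
  simp only [Multiset.map_cons, Multiset.map_singleton]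
  rfl

lemma ms_swap12 {C : Type*} (a b c : C) : ({a, b, c} : Multiset C) = {b, a, c} :=
  Multiset.cons_swap a b {c}

lemma ms_swap23 {C : Type*} (a b c : C) : ({a, b, c} : Multiset C) = {a, c, b} := by
  show a ::ₘ b ::ₘ c ::ₘ 0 = a ::ₘ c ::ₘ b ::ₘ 0
  rw [Multiset.cons_swap b c]

lemma ms_rot {C : Type*} (a b c : C) : ({a, b, c} : Multiset C) = {b, c, a} := by
  rw [ms_swap12, ms_swap23]

lemma mem3 {C : Type*} {a x y z : C} (h : a ∈ ({x, y, z} : Multiset C)) :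
    a = x ∨ a = y ∨ a = z := by
  simpa using h

lemma ms_ne {C : Type*} {a b c c' : C} (h : c ≠ c') :
    ({a, b, c} : Multiset C) ≠ {a, b, c'} := by
  intro heq
  have h1 : ({b, c} : Multiset C) = {b, c'} := (Multiset.cons_inj_right a).mp heq
  have h2 : ({c} : Multiset C) = {c'} := (Multiset.cons_inj_right b).mp h1
  exact h (Multiset.singleton_inj.mp h2)

theorem merge_works {X C : Type*} [Fintype X] (r : X → X → C)
    (hsym : ∀ x y, r x y = r y x) {α β : C}
    (hα : α ∈ colorIm r) (hβ : β ∈ colorIm r) (hne : α ≠ β)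
    {m1 m2 : Multiset C} (h1 : m1 ∈ A3 r) (h2 : m2 ∈ A3 r) (h12 : m1 ≠ m2)
    (hmap : m1.map (mrg α β) = m2.map (mrg α β)) :
    ∃ r₁ : X → X → C, (∀ x y, r₁ x y = r₁ y x) ∧ IsFusion r r₁ ∧
      a2 r₁ + 1 = a2 r ∧ a3 r₁ + 1 ≤ a3 r := by
  classical
  set f : C → C := mrg α β with hf
  refine ⟨fun x y => f (r x y), fun x y => show f (r x y) = f (r y x) by rw [hsym x y],
    fun x y u v _ _ h => show f (r x y) = f (r u v) by rw [h], ?_, ?_⟩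
  · have hSfin : (colorIm r).Finite :=
      Set.Finite.subset (Set.finite_range fun p : X × X => r p.1 p.2)
        (by rintro c ⟨x, y, _, h⟩; exact ⟨(x, y), h⟩)
    have hIm : colorIm (fun x y => f (r x y)) = f '' colorIm r := by
      ext c
      constructor
      · rintro ⟨x, y, hxy, h⟩; exact ⟨r x y, ⟨x, y, hxy, rfl⟩, h⟩
      · rintro ⟨d, ⟨x, y, hxy, rfl⟩, h⟩; exact ⟨x, y, hxy, h⟩
    have himg : f '' colorIm r = colorIm r \ {β} := by
      ext c
      constructor
      · rintro ⟨d, hd, rfl⟩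
        by_cases hdβ : d = β
        · subst hdβ; rw [hf, mrg_self]; exact ⟨hα, hne⟩
        · rw [hf, mrg_of_ne hdβ]; exact ⟨hd, hdβ⟩
      · rintro ⟨hc, hcβ⟩
        exact ⟨c, hc, mrg_of_ne hcβ⟩
    rw [a2, a2, hIm, himg]
    exact Set.ncard_diff_singleton_add_one hβ hSfin
  · have hA3fin : (A3 r).Finite :=
      Set.Finite.subset
        (Set.finite_range fun p : X × X × X =>
          ({r p.1 p.2.1, r p.2.1 p.2.2, r p.1 p.2.2} : Multiset C))
        (by rintro m ⟨x, y, z, _, _, _, rfl⟩; exact ⟨(x, y, z), rfl⟩)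
    have hA3 : A3 (fun x y => f (r x y)) = (Multiset.map f) '' A3 r := by
      ext m
      constructor
      · rintro ⟨x, y, z, ha, hb, hc, rfl⟩
        exact ⟨{r x y, r y z, r x z}, ⟨x, y, z, ha, hb, hc, rfl⟩, map3 f _ _ _⟩
      · rintro ⟨m', ⟨x, y, z, ha, hb, hc, rfl⟩, rfl⟩
        exact ⟨x, y, z, ha, hb, hc, (map3 f _ _ _).symm⟩
    have hsub : (Multiset.map f) '' A3 r = (Multiset.map f) '' (A3 r \ {m1}) := by
      refine Set.Subset.antisymm ?_ (Set.image_mono (f := Multiset.map f) Set.diff_subset)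
      rintro _ ⟨m, hm, rfl⟩
      by_cases hmm : m = m1
      · exact ⟨m2, ⟨h2, fun hh => h12 (Set.mem_singleton_iff.mp hh).symm⟩,
          by rw [hmm, hmap]⟩
      · exact ⟨m, ⟨hm, hmm⟩, rfl⟩
    have hle : a3 (fun x y => f (r x y)) ≤ (A3 r \ {m1}).ncard := by
      rw [a3, hA3, hsub]
      exact Set.ncard_image_le hA3fin.diff
    have h4 := Set.ncard_diff_singleton_add_one h1 hA3fin
    have h5 : (A3 r).ncard = a3 r := rfl
    omega

end LemA1Aux

open LemA1Aux

/-- Lemma `lem:a1`. -/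
theorem lem_a1 {X C : Type*} [Fintype X] (r : X → X → C)
    (hsym : ∀ x y, r x y = r y x)
    (h2 : 2 ≤ a2 r) (hm : 0 < (Mdeg r 2).ncard) (hX : 5 ≤ Fintype.card X) :
    ∃ r₁ : X → X → C, (∀ x y, r₁ x y = r₁ y x) ∧ IsFusion r r₁ ∧
      a2 r₁ + 1 = a2 r ∧ a3 r₁ + 1 ≤ a3 r := by
  classical
  -- extract the degree-2 configuration
  obtain ⟨α, x, hx2⟩ : ∃ α x, 2 ≤ {y | y ≠ x ∧ r x y = α}.ncard :=
    Set.nonempty_of_ncard_ne_zero (by omega : (Mdeg r 2).ncard ≠ 0)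
  obtain ⟨y, z, hy, hz, hyz⟩ :=
    (Set.one_lt_ncard_iff (Set.toFinite _)).mp (by omega : 1 < {y | y ≠ x ∧ r x y = α}.ncard)
  obtain ⟨hyx, hrxy⟩ := hy
  obtain ⟨hzx, hrxz⟩ := hz
  -- basic helpers
  have tri : ∀ a b c : X, a ≠ b → b ≠ c → a ≠ c →
      ({r a b, r b c, r a c} : Multiset C) ∈ A3 r := fun a b c h1 h2 h3 => ⟨a, b, c, h1, h2, h3, rfl⟩
  have memIm : ∀ a b : X, a ≠ b → r a b ∈ colorIm r := fun a b h => ⟨a, b, h, rfl⟩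
  have hαIm : α ∈ colorIm r := hrxy ▸ memIm x y hyx.symm
  -- reduce to exhibiting a collision
  suffices key : ∃ (a b : C) (m1 m2 : Multiset C), a ∈ colorIm r ∧ b ∈ colorIm r ∧ a ≠ b ∧
      m1 ∈ A3 r ∧ m2 ∈ A3 r ∧ m1 ≠ m2 ∧ m1.map (mrg a b) = m2.map (mrg a b) by
    obtain ⟨a, b, m1, m2, k1, k2, k3, k4, k5, k6, k7⟩ := key
    exact merge_works r hsym k1 k2 k3 k4 k5 k6 k7
  by_contra hK
  push_neg at hK
  have hcol : ∀ (a b : C) (m1 m2 : Multiset C), a ∈ colorIm r → b ∈ colorIm r → a ≠ b →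
      m1 ∈ A3 r → m2 ∈ A3 r → m1.map (mrg a b) = m2.map (mrg a b) → m1 = m2 := by
    intro a b m1 m2 k1 k2 k3 k4 k5 k6
    by_contra hne
    exact hK a b m1 m2 k1 k2 k3 k4 k5 hne k6
  -- pair uniqueness
  have hU : ∀ δ ε ζ ζ' : C, ζ ∈ colorIm r → ζ' ∈ colorIm r → ζ ≠ ζ' →
      ({δ, ε, ζ} : Multiset C) ∈ A3 r → ({δ, ε, ζ'} : Multiset C) ∈ A3 r → False := by
    intro δ ε ζ ζ' hζ hζ' hne hm1 hm2
    refine ms_ne hne (hcol ζ ζ' _ _ hζ hζ' hne hm1 hm2 ?_)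
    rw [map3, map3, mrg_self, mrg_left]
  -- the {α,α,γ'} vs {γ',δ,δ} collision
  have hV : ∀ γ' δ : C, δ ∈ colorIm r → δ ≠ α →
      ({α, α, γ'} : Multiset C) ∈ A3 r → ({γ', δ, δ} : Multiset C) ∈ A3 r → False := by
    intro γ' δ hδIm hδα hm1 hm2
    have heq : ({α, α, γ'} : Multiset C) = {γ', δ, δ} := by
      refine hcol α δ _ _ hαIm hδIm (Ne.symm hδα) hm1 hm2 ?_
      rw [map3, map3, mrg_self, mrg_left]
      exact (ms_rot (mrg α δ γ') α α).symm
    have hαm : α ∈ ({α, α, γ'} : Multiset C) := by simp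
    rw [heq] at hαm
    rcases mem3 hαm with h | h | h
    · rw [← h] at heq
      have hδm : δ ∈ ({α, δ, δ} : Multiset C) := by simp
      rw [← heq] at hδm
      rcases mem3 hδm with h' | h' | h' <;> exact hδα h'
    · exact hδα h.symm
    · exact hδα h.symm
  -- distinct points outside {x,y,z}
  obtain ⟨w, hw, w', hw', hww'⟩ : ∃ w ∈ ({x, y, z} : Finset X)ᶜ, ∃ w' ∈ ({x, y, z} : Finset X)ᶜ,
      w ≠ w' := by
    refine Finset.one_lt_card.mp ?_
    have hc3 : ({x, y, z} : Finset X).card ≤ 3 := by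
      refine le_trans (Finset.card_insert_le _ _) ?_
      have := Finset.card_insert_le y ({z} : Finset X)
      simp at this ⊢
      omega
    have := Finset.card_compl ({x, y, z} : Finset X)
    omega
  simp only [Finset.mem_compl, Finset.mem_insert, Finset.mem_singleton, not_or] at hw hw'
  obtain ⟨hwx, hwy, hwz⟩ := hw
  obtain ⟨hw'x, hw'y, hw'z⟩ := hw'
  by_cases hcase : r y z = α
  · -- CASE 1 : the triangle x y z is monochromatic
    have T1 : ({α, α, α} : Multiset C) ∈ A3 r := by
      have := tri x y z hyx.symm hyz hzx.symm
      rwa [hrxy, hrxz, hcase] at this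
    have hnot2 : ∀ δ : C, δ ∈ colorIm r → δ ≠ α → ({α, α, δ} : Multiset C) ∈ A3 r → False :=
      fun δ hδ hne hmem => hU α α δ α hδ hαIm hne hmem T1
    have hnot11 : ∀ δ : C, δ ∈ colorIm r → δ ≠ α → ({α, δ, δ} : Multiset C) ∈ A3 r → False :=
      fun δ hδ hne hmem => hV α δ hδ hne T1 hmem
    -- every point outside {x,y,z} is joined to x, y, z by α
    have hall : ∀ w, w ≠ x → w ≠ y → w ≠ z → r w x = α ∧ r w y = α ∧ r w z = α := by
      intro w hwx hwy hwz
      have Txy : ({r w x, α, r w y} : Multiset C) ∈ A3 r := by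
        have := tri w x y hwx hyx.symm hwy; rwa [hrxy] at this
      have Txz : ({r w x, α, r w z} : Multiset C) ∈ A3 r := by
        have := tri w x z hwx hzx.symm hwz; rwa [hrxz] at this
      have Tyz : ({r w y, α, r w z} : Multiset C) ∈ A3 r := by
        have := tri w y z hwy hyz hwz; rwa [hcase] at this
      have haIm := memIm w x hwx
      have hbIm := memIm w y hwy
      have hcIm := memIm w z hwz
      have ha : r w x = α := by
        by_contra haα
        have hbα : r w y ≠ α := by
          intro h; rw [h] at Txy
          exact hnot2 _ haIm haα (by rwa [ms_rot] at Txy)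
        have hcα : r w z ≠ α := by
          intro h; rw [h] at Txz
          exact hnot2 _ haIm haα (by rwa [ms_rot] at Txz)
        have hbc : r w y = r w z := by
          by_contra h; exact hU _ _ _ _ hbIm hcIm h Txy Txz
        rw [← hbc] at Tyz
        exact hnot11 _ hbIm hbα (by rwa [ms_swap12] at Tyz)
      rw [ha] at Txy Txz
      refine ⟨ha, ?_, ?_⟩
      · by_contra hbα; exact hnot2 _ hbIm hbα Txy
      · by_contra hcα; exact hnot2 _ hcIm hcα Txz
    -- a second color exists
    obtain ⟨β, hβIm, hβα⟩ : ∃ β ∈ colorIm r, β ≠ α := by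
      by_contra h
      push_neg at h
      have hsub : colorIm r ⊆ {α} := fun c hc => h c hc
      have := Set.ncard_le_ncard hsub (Set.finite_singleton α)
      rw [Set.ncard_singleton] at this
      rw [a2] at h2
      omega
    obtain ⟨u, v, huv, hruv⟩ := hβIm
    have hedge : ∀ p q : X, p ≠ q → (q = x ∨ q = y ∨ q = z) → r p q = α := by
      intro p q hpq hq
      by_cases hp : p = x ∨ p = y ∨ p = z
      · rcases hp with hp | hp | hp <;> rcases hq with hq | hq | hq <;> subst hp <;> subst hq
        · exact absurd rfl hpq
        · exact hrxy
        · exact hrxz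
        · rw [hsym]; exact hrxy
        · exact absurd rfl hpq
        · exact hcase
        · rw [hsym]; exact hrxz
        · rw [hsym]; exact hcase
        · exact absurd rfl hpq
      · push_neg at hp
        obtain ⟨e1, e2, e3⟩ := hall p hp.1 hp.2.1 hp.2.2
        rcases hq with hq | hq | hq <;> subst hq
        · exact e1
        · exact e2
        · exact e3
    have hu : ¬(u = x ∨ u = y ∨ u = z) := by
      intro h
      exact hβα (by rw [← hruv, hsym u v]; exact hedge v u (Ne.symm huv) h)
    have hv : ¬(v = x ∨ v = y ∨ v = z) := by
      intro h
      exact hβα (by rw [← hruv]; exact hedge u v huv h)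
    push_neg at hu hv
    have hux : r u x = α := hedge u x hu.1 (Or.inl rfl)
    have hvx : r v x = α := hedge v x hv.1 (Or.inl rfl)
    have Tuvx : ({β, α, α} : Multiset C) ∈ A3 r := by
      have := tri u v x huv hv.1 hu.1
      rwa [hruv, hvx, hux] at this
    exact hnot2 β (⟨u, v, huv, hruv⟩) hβα (by rwa [ms_rot] at Tuvx)
  · -- CASE 2 : r y z = γ ≠ α
    set γ := r y z with hγdef
    have hγα : γ ≠ α := hcase
    have hγIm : γ ∈ colorIm r := memIm y z hyz
    have T0 : ({α, γ, α} : Multiset C) ∈ A3 r := by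
      have := tri x y z hyx.symm hyz hzx.symm
      rwa [hrxy, hrxz] at this
    have T0' : ({α, α, γ} : Multiset C) ∈ A3 r := by rwa [ms_swap23] at T0
    have hR1 : ∀ δ : C, δ ∈ colorIm r → ({α, α, δ} : Multiset C) ∈ A3 r → δ = γ := by
      intro δ h1 h2
      by_contra hne
      exact hU α α δ γ h1 hγIm hne h2 T0'
    have hR2 : ∀ δ : C, δ ∈ colorIm r → ({α, γ, δ} : Multiset C) ∈ A3 r → δ = α := by
      intro δ h1 h2
      by_contra hne
      exact hU α γ δ α h1 hαIm hne h2 T0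
    have hR3 : ({γ, γ, γ} : Multiset C) ∈ A3 r → False := by
      intro h
      have heq : ({α, α, γ} : Multiset C) = {γ, γ, γ} := by
        refine hcol α γ _ _ hαIm hγIm (Ne.symm hγα) T0' h ?_
        rw [map3, map3, mrg_self, mrg_left]
      have : α ∈ ({α, α, γ} : Multiset C) := by simp
      rw [heq] at this
      rcases mem3 this with h' | h' | h' <;> exact hγα h'.symm
    have hR4 : ∀ δ : C, δ ∈ colorIm r → δ ≠ α → ({γ, δ, δ} : Multiset C) ∈ A3 r → False :=
      fun δ h1 h2 h3 => hV γ δ h1 h2 T0' h3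
    -- every point outside {x,y,z} has pattern (γ, α, α) towards (x, y, z)
    have hP1 : ∀ w, w ≠ x → w ≠ y → w ≠ z → r w x = γ ∧ r w y = α ∧ r w z = α := by
      intro w hwx hwy hwz
      have Txy : ({r w x, α, r w y} : Multiset C) ∈ A3 r := by
        have := tri w x y hwx hyx.symm hwy; rwa [hrxy] at this
      have Txz : ({r w x, α, r w z} : Multiset C) ∈ A3 r := by
        have := tri w x z hwx hzx.symm hwz; rwa [hrxz] at this
      have Tyz : ({r w y, γ, r w z} : Multiset C) ∈ A3 r := tri w y z hwy hyz hwz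
      have haIm := memIm w x hwx
      have hbIm := memIm w y hwy
      have hcIm := memIm w z hwz
      have haα : r w x ≠ α := by
        intro h
        rw [h] at Txy Txz
        have hb := hR1 _ hbIm Txy
        have hc := hR1 _ hcIm Txz
        rw [hb, hc] at Tyz
        exact hR3 (by rwa [ms_swap12] at Tyz)
      have ha : r w x = γ := by
        by_contra haγ
        have hbα : r w y ≠ α := by
          intro h; rw [h] at Txy
          exact haγ (hR1 _ haIm (by rwa [ms_rot] at Txy))
        have hbγ : r w y ≠ γ := by
          intro h; rw [h] at Txy
          exact haα (hR2 _ haIm (by rwa [ms_rot] at Txy))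
        have hcα : r w z ≠ α := by
          intro h; rw [h] at Txz
          exact haγ (hR1 _ haIm (by rwa [ms_rot] at Txz))
        have hbc : r w y = r w z := by
          by_contra h; exact hU _ _ _ _ hbIm hcIm h Txy Txz
        rw [← hbc] at Tyz
        exact hR4 _ hbIm hbα (by rwa [ms_swap12] at Tyz)
      rw [ha] at Txy Txz
      exact ⟨ha, hR2 _ hbIm (by rwa [ms_swap12] at Txy),
        hR2 _ hcIm (by rwa [ms_swap12] at Txz)⟩
    obtain ⟨e1, e2, e3⟩ := hP1 w hwx hwy hwz
    obtain ⟨f1, f2, f3⟩ := hP1 w' hw'x hw'y hw'z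
    have hdIm := memIm w w' hww'
    have Td : ({r w w', α, α} : Multiset C) ∈ A3 r := by
      have := tri w w' y hww' hw'y hwy
      rwa [f2, e2] at this
    have hd : r w w' = γ := hR1 _ hdIm (by rwa [ms_rot] at Td)
    have Tx : ({γ, γ, γ} : Multiset C) ∈ A3 r := by
      have := tri w w' x hww' hw'x hwx
      rwa [hd, f1, e1] at this
    exact hR3 Tx
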